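/- Let n = p₁⋯p_k be a prime factorization of n with p_i ≤ p_j whenever i < j. Let m be the smallest index with p_m ≥ 3 (or m = k if no such index exists), let f₁ = |{p_i : p_i ≤ 3, i ≠ m}| and f₂ = |{p_i : p_i ≥ 5, i ≠ m}| (counted with multiplicity). Then rb(Z_{p_m},S) + f₁ + 2f₂ ≤ rb(Z_n,S). -/

import Mathlib

/-- `c` admits a rainbow solution to the Sidon equation `x₁ + x₂ = x₃ + x₄`:
a solution whose four colors are pairwise distinct. -/
def HasRainbowSidon {n : ℕ} {α : Type*} (c : ZMod n → α) : Prop :=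
  ∃ x₁ x₂ x₃ x₄ : ZMod n, x₁ + x₂ = x₃ + x₄ ∧
    c x₁ ≠ c x₂ ∧ c x₁ ≠ c x₃ ∧ c x₁ ≠ c x₄ ∧
    c x₂ ≠ c x₃ ∧ c x₂ ≠ c x₄ ∧ c x₃ ≠ c x₄

/-- The rainbow number `rb(ℤ_n, S)` of `ℤ_n` for the Sidon equation: the least `r > 0`
such that every exact (surjective) `r`-coloring of `ℤ_n` admits a rainbow Sidon solution.
(When no such `r` exists, `r = n + 1` belongs to the set vacuously, matching the
convention `rb(ℤ_n, S) = n + 1`.) -/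
noncomputable def rbSidon (n : ℕ) : ℕ :=
  sInf {r : ℕ | 0 < r ∧ ∀ c : ZMod n → Fin r, Function.Surjective c → HasRainbowSidon c}

/- ### Auxiliary lemmas -/

lemma aux_list_prod_eraseIdx : ∀ (L : List ℕ) (m : ℕ) (h : m < L.length),
    L.prod = L.get ⟨m, h⟩ * (L.eraseIdx m).prod := by
  intro L
  induction L with
  | nil => intro m h; simp at h
  | cons a t ih =>
    intro m h
    cases m with
    | zero => simp
    | succ k =>
      have hk : k < t.length := by simpa using h
      rw [List.eraseIdx_cons_succ, List.prod_cons, List.prod_cons, ih k hk]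
      simp [mul_left_comm]

lemma aux_list_mapsum_eraseIdx (f : ℕ → ℕ) : ∀ (L : List ℕ) (m : ℕ) (h : m < L.length),
    (L.map f).sum = f (L.get ⟨m, h⟩) + ((L.eraseIdx m).map f).sum := by
  intro L
  induction L with
  | nil => intro m h; simp at h
  | cons a t ih =>
    intro m h
    cases m with
    | zero => simp
    | succ k =>
      have hk : k < t.length := by simpa using h
      rw [List.eraseIdx_cons_succ, List.map_cons, List.map_cons, List.sum_cons,
        List.sum_cons, ih k hk]
      simp; omega

lemma aux_sum_univ_get (f : ℕ → ℕ) : ∀ (L : List ℕ),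
    ∑ i : Fin L.length, f (L.get i) = (L.map f).sum := by
  intro L
  induction L with
  | nil => simp
  | cons a t ih =>
    show ∑ i : Fin (t.length + 1), f ((a :: t).get i) = (List.map f (a :: t)).sum
    rw [Fin.sum_univ_succ]
    simp only [List.map_cons, List.sum_cons]
    congr 1

lemma aux_merge_coloring {n R r : ℕ} (h1 : 0 < r) (hrR : r ≤ R)
    (h : ∃ c : ZMod n → Fin R, Function.Surjective c ∧ ¬ HasRainbowSidon c) :
    ∃ c : ZMod n → Fin r, Function.Surjective c ∧ ¬ HasRainbowSidon c := by
  obtain ⟨c₀, hc₀s, hc₀r⟩ := h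
  set g : Fin R → Fin r := fun j => if hj : (j : ℕ) < r then ⟨j, hj⟩ else ⟨0, h1⟩ with hg
  have hgs : Function.Surjective g := by
    intro b
    refine ⟨⟨b, lt_of_lt_of_le b.isLt hrR⟩, ?_⟩
    simp [hg, b.isLt]
  refine ⟨g ∘ c₀, hgs.comp hc₀s, ?_⟩
  rintro ⟨x₁, x₂, x₃, x₄, heq, h12, h13, h14, h23, h24, h34⟩
  exact hc₀r ⟨x₁, x₂, x₃, x₄, heq,
    fun e => h12 (congrArg g e), fun e => h13 (congrArg g e), fun e => h14 (congrArg g e),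
    fun e => h23 (congrArg g e), fun e => h24 (congrArg g e), fun e => h34 (congrArg g e)⟩

lemma aux_rbSidon_set_nonempty (n : ℕ) [NeZero n] :
    {r : ℕ | 0 < r ∧ ∀ c : ZMod n → Fin r, Function.Surjective c → HasRainbowSidon c}.Nonempty := by
  refine ⟨n + 1, Nat.succ_pos n, fun c hc => absurd (Fintype.card_le_of_surjective c hc) ?_⟩
  simp [ZMod.card]

lemma aux_exists_coloring_of_lt (n s : ℕ) (hs : 0 < s) (h : s < rbSidon n) :
    ∃ c : ZMod n → Fin s, Function.Surjective c ∧ ¬ HasRainbowSidon c := by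
  unfold rbSidon at h
  have h' := Nat.notMem_of_lt_sInf h
  simp only [Set.mem_setOf_eq] at h'
  push_neg at h'
  exact h' hs

lemma aux_two_le_rbSidon (n : ℕ) [NeZero n] : 2 ≤ rbSidon n := by
  have hmem := Nat.sInf_mem (aux_rbSidon_set_nonempty n)
  simp only [Set.mem_setOf_eq] at hmem
  obtain ⟨hpos, hall⟩ := hmem
  change 0 < rbSidon n at hpos
  by_contra hlt
  push_neg at hlt
  have hone : rbSidon n = 1 := by omega
  have hcs : Function.Surjective (fun _ : ZMod n => (⟨0, hpos⟩ : Fin (rbSidon n))) := by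
    intro b
    refine ⟨0, ?_⟩
    have hb := b.isLt
    apply Fin.ext
    simp; omega
  obtain ⟨_, _, _, _, _, hne, _⟩ := hall _ hcs
  exact hne rfl

/-- The key construction step: extend a rainbow-free coloring of `ZMod M` to `ZMod (p*M)`
    with 1 (resp. 2) new colors when `p ≤ 3` (resp. `p ≥ 5`). -/
lemma aux_sidon_step (p M s : ℕ) (hp : p.Prime) (hM : 0 < M) (hs : 0 < s)
    (h : ∃ c : ZMod M → Fin s, Function.Surjective c ∧ ¬ HasRainbowSidon c) :
    ∃ c : ZMod (p * M) → Fin (s + (if p ≤ 3 then 1 else 2)),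
      Function.Surjective c ∧ ¬ HasRainbowSidon c := by
  classical
  obtain ⟨c', hc's, hc'r⟩ := h
  have hp2 : 2 ≤ p := hp.two_le
  set δ : ℕ := if p ≤ 3 then 1 else 2 with hδdef
  have hδ1 : 1 ≤ δ := by rw [hδdef]; split <;> omega
  have hδ2 : δ ≤ 2 := by rw [hδdef]; split <;> omega
  have hN : p * M ≠ 0 := by positivity
  haveI : NeZero (p * M) := ⟨hN⟩
  haveI : NeZero M := ⟨by omega⟩
  haveI : NeZero p := ⟨by omega⟩
  have hdvd : p ∣ p * M := dvd_mul_right p M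
  set π : ZMod (p * M) →+* ZMod p := ZMod.castHom hdvd (ZMod p) with hπdef
  have hπv : ∀ x : ZMod (p * M), π x = ((x.val : ℕ) : ZMod p) := fun x => by
    rw [hπdef, ZMod.castHom_apply, ← ZMod.natCast_val]
  have hker : ∀ x : ZMod (p * M), π x = 0 ↔ p ∣ x.val := fun x => by
    rw [hπv]; exact ZMod.natCast_eq_zero_iff _ _
  set σ : ZMod (p * M) → ZMod M := fun x => ((x.val / p : ℕ) : ZMod M) with hσdef
  have hσadd : ∀ x y : ZMod (p * M), π x = 0 → π y = 0 → σ (x + y) = σ x + σ y := by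
    intro x y hx hy
    obtain ⟨a, ha⟩ := (hker x).1 hx
    obtain ⟨b, hb⟩ := (hker y).1 hy
    have hxy : (x + y).val = p * ((a + b) % M) := by
      rw [ZMod.val_add, ha, hb, ← Nat.mul_add, Nat.mul_mod_mul_left]
    simp only [hσdef, hxy, ha, hb, Nat.mul_div_cancel_left _ (by omega : 0 < p)]
    push_cast [ZMod.natCast_mod]
    ring
  have hσlift : ∀ y : ZMod M, ∃ x : ZMod (p * M), π x = 0 ∧ σ x = y := by
    intro y
    have hyv : y.val < M := ZMod.val_lt y
    have hv : ((p * y.val : ℕ) : ZMod (p * M)).val = p * y.val := by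
      rw [ZMod.val_natCast, Nat.mod_eq_of_lt (by exact mul_lt_mul_of_pos_left hyv (by omega))]
    refine ⟨((p * y.val : ℕ) : ZMod (p * M)), ?_, ?_⟩
    · rw [hker, hv]; exact Dvd.intro _ rfl
    · simp only [hσdef, hv, Nat.mul_div_cancel_left _ (by omega : 0 < p)]
      simp [ZMod.natCast_val, ZMod.cast_id]
  have hle : s ≤ s + δ := Nat.le_add_right s δ
  set c : ZMod (p * M) → Fin (s + δ) := fun x =>
    if π x = 0 then Fin.castLE hle (c' (σ x))
    else if (π x).val = 1 ∨ (π x).val = p - 1 then ⟨s, by omega⟩ else ⟨s + δ - 1, by omega⟩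
    with hcdef
  have hc : ∀ x, c x = if π x = 0 then Fin.castLE hle (c' (σ x))
      else if (π x).val = 1 ∨ (π x).val = p - 1 then ⟨s, by omega⟩
      else ⟨s + δ - 1, by omega⟩ := fun x => rfl
  have hcold : ∀ x (hx : π x = 0), c x = Fin.castLE hle (c' (σ x)) := by
    intro x hx; rw [hc, if_pos hx]
  have hnb : ∀ x (hx : π x ≠ 0), c x = if (π x).val = 1 ∨ (π x).val = p - 1
      then (⟨s, by omega⟩ : Fin (s + δ)) else ⟨s + δ - 1, by omega⟩ := by
    intro x hx; rw [hc, if_neg hx]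
  refine ⟨c, ?_, ?_⟩
  · -- surjectivity
    intro k
    by_cases hk : (k : ℕ) < s
    · obtain ⟨y, hy⟩ := hc's ⟨k, hk⟩
      obtain ⟨x, hx0, hxσ⟩ := hσlift y
      refine ⟨x, ?_⟩
      rw [hcold x hx0, hxσ, hy]
      apply Fin.ext
      rfl
    · by_cases hk2 : (k : ℕ) = s
      · refine ⟨(1 : ZMod (p * M)), ?_⟩
        have h1v : (π 1).val = 1 := by
          rw [map_one]
          haveI : Fact (1 < p) := ⟨by omega⟩
          exact ZMod.val_one p
        have h1ne : π 1 ≠ 0 := fun e => by rw [e] at h1v; simp at h1v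
        rw [hnb _ h1ne, if_pos (Or.inl h1v)]
        exact (Fin.ext hk2.symm)
      · have hkv : (k : ℕ) = s + 1 := by have := k.isLt; omega
        have hδ2' : δ = 2 := by have := k.isLt; omega
        have hp4 : ¬ p ≤ 3 := by
          intro hple
          rw [hδdef, if_pos hple] at hδ2'
          omega
        have hp5 : 5 ≤ p := by
          rcases Nat.lt_or_ge p 5 with h5 | h5
          · exfalso
            have : p = 4 := by omega
            rw [this] at hp
            norm_num at hp
          · exact h5
        refine ⟨(2 : ZMod (p * M)), ?_⟩
        have h2c : (2 : ZMod p) = ((2 : ℕ) : ZMod p) := by norm_cast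
        have h2v : (π 2).val = 2 := by
          rw [map_ofNat, h2c, ZMod.val_natCast, Nat.mod_eq_of_lt (by omega)]
        have h2ne : π 2 ≠ 0 := fun e => by rw [e] at h2v; simp at h2v
        rw [hnb _ h2ne, if_neg (by omega)]
        apply Fin.ext
        simp; omega
  · -- no rainbow
    rintro ⟨x₁, x₂, x₃, x₄, heq, h12, h13, h14, h23, h24, h34⟩
    have hπeq : π x₁ + π x₂ = π x₃ + π x₄ := by rw [← map_add, ← map_add, heq]
    have hco : ∀ (a b : ZMod (p * M)), π a = 0 → π b = 0 → c a ≠ c b →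
        c' (σ a) ≠ c' (σ b) := by
      intro a b ha hb hab e
      exact hab (by rw [hcold a ha, hcold b hb, e])
    have key4 : π x₁ = 0 → π x₂ = 0 → π x₃ = 0 → π x₄ = 0 → False := by
      intro k1 k2 k3 k4
      apply hc'r
      exact ⟨σ x₁, σ x₂, σ x₃, σ x₄,
        by rw [← hσadd _ _ k1 k2, ← hσadd _ _ k3 k4, heq],
        hco _ _ k1 k2 h12, hco _ _ k1 k3 h13, hco _ _ k1 k4 h14,
        hco _ _ k2 k3 h23, hco _ _ k2 k4 h24, hco _ _ k3 k4 h34⟩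
    have key2 : ∀ a b : ZMod (p * M), π a ≠ 0 → π b ≠ 0 → c a ≠ c b →
        (π a = π b ∨ π a = - π b) → False := by
      intro a b ha hb hab hrel
      have hva : (π a).val < p := ZMod.val_lt _
      have hvb : (π b).val < p := ZMod.val_lt _
      have hva0 : (π a).val ≠ 0 := fun e => ha ((ZMod.val_eq_zero _).1 e)
      have hvb0 : (π b).val ≠ 0 := fun e => hb ((ZMod.val_eq_zero _).1 e)
      have hvv : (π b).val = (π a).val ∨ (π b).val = p - (π a).val := by
        rcases hrel with hr | hr
        · left; rw [hr]
        · right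
          have hba : π b = - π a := by rw [hr, neg_neg]
          rw [hba, ZMod.neg_val, if_neg ha]
      by_cases ca : (π a).val = 1 ∨ (π a).val = p - 1 <;>
        by_cases cb : (π b).val = 1 ∨ (π b).val = p - 1
      · exact hab (by rw [hnb a ha, hnb b hb, if_pos ca, if_pos cb])
      · omega
      · omega
      · exact hab (by rw [hnb a ha, hnb b hb, if_neg ca, if_neg cb])
    have key3 : ∀ a b d : ZMod (p * M), π a ≠ 0 → π b ≠ 0 → π d ≠ 0 →
        c a ≠ c b → c a ≠ c d → c b ≠ c d → False := by
      intro a b d ha hb hd hab had hbd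
      have la : c a = ⟨s, by omega⟩ ∨ c a = (⟨s + δ - 1, by omega⟩ : Fin (s + δ)) := by
        rw [hnb a ha]; split
        · exact Or.inl rfl
        · exact Or.inr rfl
      have lb : c b = ⟨s, by omega⟩ ∨ c b = (⟨s + δ - 1, by omega⟩ : Fin (s + δ)) := by
        rw [hnb b hb]; split
        · exact Or.inl rfl
        · exact Or.inr rfl
      have ld : c d = ⟨s, by omega⟩ ∨ c d = (⟨s + δ - 1, by omega⟩ : Fin (s + δ)) := by
        rw [hnb d hd]; split
        · exact Or.inl rfl
        · exact Or.inr rfl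
      rcases la with la | la <;> rcases lb with lb | lb <;> rcases ld with ld | ld <;>
        first
          | exact hab (la.trans lb.symm)
          | exact had (la.trans ld.symm)
          | exact hbd (lb.trans ld.symm)
    by_cases k1 : π x₁ = 0 <;> by_cases k2 : π x₂ = 0 <;>
      by_cases k3 : π x₃ = 0 <;> by_cases k4 : π x₄ = 0
    · exact key4 k1 k2 k3 k4
    · rw [k1, k2, k3, zero_add, zero_add] at hπeq
      exact k4 hπeq.symm
    · rw [k1, k2, k4, zero_add, add_zero] at hπeq
      exact k3 hπeq.symm
    · rw [k1, k2, add_zero] at hπeq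
      exact key2 x₃ x₄ k3 k4 h34 (Or.inr (eq_neg_of_add_eq_zero_left hπeq.symm))
    · rw [k1, k3, k4, zero_add, add_zero] at hπeq
      exact k2 hπeq
    · rw [k1, k3, zero_add, zero_add] at hπeq
      exact key2 x₂ x₄ k2 k4 h24 (Or.inl hπeq)
    · rw [k1, k4, zero_add, add_zero] at hπeq
      exact key2 x₂ x₃ k2 k3 h23 (Or.inl hπeq)
    · exact key3 x₂ x₃ x₄ k2 k3 k4 h23 h24 h34
    · rw [k2, k3, k4, add_zero, add_zero] at hπeq
      exact k1 hπeq
    · rw [k2, k3, add_zero, zero_add] at hπeq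
      exact key2 x₁ x₄ k1 k4 h14 (Or.inl hπeq)
    · rw [k2, k4, add_zero, add_zero] at hπeq
      exact key2 x₁ x₃ k1 k3 h13 (Or.inl hπeq)
    · exact key3 x₁ x₃ x₄ k1 k3 k4 h13 h14 h34
    · rw [k3, k4, add_zero] at hπeq
      exact key2 x₁ x₂ k1 k2 h12 (Or.inr (eq_neg_of_add_eq_zero_left hπeq))
    · exact key3 x₁ x₂ x₄ k1 k2 k4 h12 h14 h24
    · exact key3 x₁ x₂ x₃ k1 k2 k3 h12 h13 h23
    · exact key3 x₁ x₂ x₃ k1 k2 k3 h12 h13 h23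

lemma aux_sidon_chain (L : List ℕ) (hpr : ∀ p ∈ L, p.Prime) :
    ∀ (M s N r : ℕ), 0 < M → 0 < s → N = M * L.prod →
    r = s + (L.map fun p => if p ≤ 3 then 1 else 2).sum →
    (∃ c : ZMod M → Fin s, Function.Surjective c ∧ ¬ HasRainbowSidon c) →
    ∃ c : ZMod N → Fin r, Function.Surjective c ∧ ¬ HasRainbowSidon c := by
  induction L with
  | nil =>
    intro M s N r hM hs hN hr h
    have hN' : N = M := by simpa using hN
    have hr' : r = s := by simpa using hr
    subst hN' hr'
    exact h
  | cons p t ih =>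
    intro M s N r hM hs hN hr h
    have hp := hpr p List.mem_cons_self
    have step := aux_sidon_step p M s hp hM hs h
    refine ih (fun q hq => hpr q (List.mem_cons_of_mem _ hq)) (p * M)
      (s + if p ≤ 3 then 1 else 2) N r (Nat.mul_pos hp.pos hM) (by omega) ?_ ?_ step
    · rw [hN, List.prod_cons]; ring
    · rw [hr, List.map_cons, List.sum_cons, add_assoc]

theorem rb_zmod_n_sidon_lower_bound (n : ℕ) (l : List ℕ) (hne : l ≠ [])
    (hprime : ∀ p ∈ l, p.Prime) (hsorted : l.Pairwise (· ≤ ·)) (hprod : n = l.prod)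
    (m : Fin l.length)
    (hm₁ : (∃ i : Fin l.length, 3 ≤ l.get i) →
      (3 ≤ l.get m ∧ ∀ i : Fin l.length, 3 ≤ l.get i → m ≤ i))
    (hm₂ : (∀ i : Fin l.length, l.get i < 3) → (m : ℕ) = l.length - 1)
    (f₁ f₂ : ℕ)
    (hf₁ : f₁ = (Finset.univ.filter fun i : Fin l.length => i ≠ m ∧ l.get i ≤ 3).card)
    (hf₂ : f₂ = (Finset.univ.filter fun i : Fin l.length => i ≠ m ∧ 5 ≤ l.get i).card) :
    rbSidon (l.get m) + f₁ + 2 * f₂ ≤ rbSidon n := by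
  classical
  set δf : ℕ → ℕ := fun p => if p ≤ 3 then 1 else 2 with hδf
  set q : ℕ := l.get m with hqdef
  have hqprime : q.Prime := hprime _ (List.get_mem l m)
  have hq2 : 2 ≤ q := hqprime.two_le
  set L₀ : List ℕ := l.eraseIdx m with hL₀
  have hL₀prime : ∀ p ∈ L₀, p.Prime := fun p hp => hprime p (List.eraseIdx_subset hp)
  have hL₀pos : 0 < L₀.prod := List.prod_pos (fun a ha => (hL₀prime a ha).pos)
  -- the key counting identity
  have hsum : f₁ + 2 * f₂ = (L₀.map δf).sum := by
    have h1 : (l.map δf).sum = δf q + (L₀.map δf).sum :=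
      aux_list_mapsum_eraseIdx δf l m.1 m.2
    have h2 : ∑ i : Fin l.length, δf (l.get i) = (l.map δf).sum := aux_sum_univ_get δf l
    have h3 : ∑ i ∈ Finset.univ.filter (fun i : Fin l.length => i = m), δf (l.get i) +
        ∑ i ∈ Finset.univ.filter (fun i : Fin l.length => ¬ i = m), δf (l.get i) =
        ∑ i : Fin l.length, δf (l.get i) :=
      Finset.sum_filter_add_sum_filter_not _ _ _
    have h4 : ∑ i ∈ Finset.univ.filter (fun i : Fin l.length => i = m), δf (l.get i)
        = δf q := by
      rw [Finset.filter_eq', if_pos (Finset.mem_univ m), Finset.sum_singleton, hqdef]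
    have h5 : ∑ i ∈ Finset.univ.filter (fun i : Fin l.length => ¬ i = m), δf (l.get i)
        = f₁ + 2 * f₂ := by
      have hsplit : ∑ i ∈ Finset.univ.filter (fun i : Fin l.length => ¬ i = m), δf (l.get i)
          = ∑ i ∈ (Finset.univ.filter (fun i : Fin l.length => ¬ i = m)).filter
              (fun i => l.get i ≤ 3), 1 +
            ∑ i ∈ (Finset.univ.filter (fun i : Fin l.length => ¬ i = m)).filter
              (fun i => ¬ l.get i ≤ 3), 2 := by
        rw [hδf]
        exact Finset.sum_ite _ _
      rw [hsplit, Finset.sum_const, Finset.sum_const, Finset.filter_filter,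
        Finset.filter_filter, smul_eq_mul, smul_eq_mul, mul_one]
      have e1 : (Finset.univ.filter fun i : Fin l.length => ¬ i = m ∧ l.get i ≤ 3)
          = (Finset.univ.filter fun i : Fin l.length => i ≠ m ∧ l.get i ≤ 3) := rfl
      have e2 : (Finset.univ.filter fun i : Fin l.length => ¬ i = m ∧ ¬ l.get i ≤ 3)
          = (Finset.univ.filter fun i : Fin l.length => i ≠ m ∧ 5 ≤ l.get i) := by
        apply Finset.filter_congr
        intro i _
        have hip : (l.get i).Prime := hprime _ (List.get_mem l i)
        have h2le : 2 ≤ l.get i := hip.two_le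
        have hne4 : l.get i ≠ 4 := by
          intro e
          rw [e] at hip
          norm_num at hip
        constructor
        · rintro ⟨him, hgt⟩; exact ⟨him, by omega⟩
        · rintro ⟨him, hge⟩; exact ⟨him, by omega⟩
      rw [e1, e2, hf₁, hf₂]
      omega
    omega
  -- rewrite n
  have hln : n = q * L₀.prod := by
    rw [hprod, hqdef, hL₀]
    exact aux_list_prod_eraseIdx l m.1 m.2
  rw [hln]
  set N : ℕ := q * L₀.prod with hNdef
  haveI : NeZero N := ⟨Nat.mul_ne_zero (by omega) (by omega)⟩
  haveI : NeZero q := ⟨by omega⟩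
  have h2q : 2 ≤ rbSidon q := aux_two_le_rbSidon q
  obtain ⟨c₀, hc₀s, hc₀r⟩ := aux_exists_coloring_of_lt q (rbSidon q - 1) (by omega) (by omega)
  have big := aux_sidon_chain L₀ hL₀prime q (rbSidon q - 1) N
    ((rbSidon q - 1) + (L₀.map δf).sum) (by omega) (by omega) rfl rfl ⟨c₀, hc₀s, hc₀r⟩
  have hfin : rbSidon q + f₁ + 2 * f₂ ≤ sInf {r : ℕ | 0 < r ∧
      ∀ c : ZMod N → Fin r, Function.Surjective c → HasRainbowSidon c} := by
    apply le_csInf (aux_rbSidon_set_nonempty N)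
    intro b hb
    simp only [Set.mem_setOf_eq] at hb
    obtain ⟨hb0, hball⟩ := hb
    by_contra hbad
    push_neg at hbad
    have hble : b ≤ (rbSidon q - 1) + (L₀.map δf).sum := by omega
    obtain ⟨c, hcs, hcr⟩ := aux_merge_coloring hb0 hble big
    exact hcr (hball c hcs)
  exact hfin
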